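/- arXiv:2012.10172 — 4 statements merged into one kernel-verified Lean document; each statement's English description precedes it below -/
import Mathlib

section
/- Let α be a type and let c : ℕ → List α be a sequence of chains satisfying the bounded displacement property with bound dis : ℕ. Then pruning the last dis blocks of every chain yields pairwise prefix-comparable chains: for all n and m, ((c n).take ((c n).length - dis)) is a prefix of ((c m).take ((c m).length - dis)), or ((c m).take ((c m).length - dis)) is a prefix of ((c n).take ((c n).length - dis)). (This is the core of the paper's Theorem 1: known bounded displacement eventual prefix consistency yields the strong prefix property, hence is equivalent to Consensus.) -/
/-- The sequence of chains `c` satisfies the bounded displacement property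
with bound `dis`. -/
def BoundedDisplacement {α : Type*} (c : ℕ → List α) (dis : ℕ) : Prop :=
  ∀ n m, n ≤ m → ∀ i, i + dis < (c n).length → (c n)[i]? = (c m)[i]?

private lemma take_eq_aux {α : Type*} (c : ℕ → List α) (dis : ℕ)
    (hbd : BoundedDisplacement c dis) {n m k : ℕ} (hnm : n ≤ m)
    (hk : k ≤ (c n).length - dis) : (c n).take k = (c m).take k := by
  apply List.ext_getElem?
  intro i
  by_cases hi : i < k
  · have hlt : i + dis < (c n).length := by omega
    rw [List.getElem?_take_of_lt hi, List.getElem?_take_of_lt hi]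
    exact hbd n m hnm i hlt
  · have h1 : ((c n).take k)[i]? = none := by
      apply List.getElem?_eq_none_iff.mpr
      simp [List.length_take]; omega
    have h2 : ((c m).take k)[i]? = none := by
      apply List.getElem?_eq_none_iff.mpr
      simp [List.length_take]; omega
    rw [h1, h2]

theorem known_bounded_displacement_strong_prefix {α : Type*} (c : ℕ → List α) (dis : ℕ)
    (hbd : BoundedDisplacement c dis) :
    ∀ n m, ((c n).take ((c n).length - dis)) <+: ((c m).take ((c m).length - dis)) ∨
      ((c m).take ((c m).length - dis)) <+: ((c n).take ((c n).length - dis)) := by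
  have key : ∀ n m, n ≤ m →
      ((c n).take ((c n).length - dis)) <+: ((c m).take ((c m).length - dis)) ∨
      ((c m).take ((c m).length - dis)) <+: ((c n).take ((c n).length - dis)) := by
    intro n m hnm
    set L1 := (c n).length - dis with hL1
    set L2 := (c m).length - dis with hL2
    by_cases h : L1 ≤ L2
    · left
      have heq : (c n).take L1 = (c m).take L1 := take_eq_aux c dis hbd hnm le_rfl
      rw [heq]
      calc (c m).take L1 = ((c m).take L2).take L1 := by rw [List.take_take, min_eq_left h]
        _ <+: (c m).take L2 := List.take_prefix _ _
    · right
      have heq : (c m).take L2 = (c n).take L2 := (take_eq_aux c dis hbd hnm (by omega)).symm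
      rw [heq]
      calc (c n).take L2 = ((c n).take L1).take L2 := by
            rw [List.take_take, min_eq_left (by omega : L2 ≤ L1)]
        _ <+: (c n).take L1 := List.take_prefix _ _
  intro n m
  rcases le_total n m with h | h
  · exact key n m h
  · exact (key m n h).symm
end

section
/- Let α be a type and let c : ℕ → List α be a sequence of chains satisfying the bounded displacement property with some bound dis : ℕ, and suppose c has unbounded lengths. Then pruning the second half of every chain yields eventually pairwise prefix-comparable chains: there exists N such that for all n, m ≥ N, ((c n).take ((c n).length / 2)) is a prefix of ((c m).take ((c m).length / 2)), or ((c m).take ((c m).length / 2)) is a prefix of ((c n).take ((c n).length / 2)). (This is the core of the forward direction of the paper's Theorem 2: unknown bounded displacement eventual prefix consistency yields the eventual strong prefix property.) -/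
private lemma half_lemma {α : Type*} (c : ℕ → List α) (dis : ℕ)
    (hbd : BoundedDisplacement c dis) (n m : ℕ) (hnm : n ≤ m)
    (hlen : 2 * dis ≤ (c n).length) :
    ((c n).take ((c n).length / 2)) <+: ((c m).take ((c m).length / 2)) ∨
    ((c m).take ((c m).length / 2)) <+: ((c n).take ((c n).length / 2)) := by
  set a := (c n).length / 2 with ha
  set b := (c m).length / 2 with hb
  have hdis : dis ≤ a := Nat.le_div_iff_mul_le (by norm_num) |>.mpr (by omega)
  have hal : a + a ≤ (c n).length := by
    have := Nat.div_mul_le_self (c n).length 2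
    omega
  have key : ∀ i, i < min a b → (c n)[i]? = (c m)[i]? := by
    intro i hi
    apply hbd n m hnm
    have : i < a := lt_of_lt_of_le hi (min_le_left _ _)
    omega
  rcases le_total a b with hab | hab
  · left
    have heq : (c n).take a = (c m).take a := by
      apply List.ext_getElem?
      intro i
      by_cases hia : i < a
      · rw [List.getElem?_take_of_lt hia, List.getElem?_take_of_lt hia]
        exact key i (by omega)
      · rw [List.getElem?_eq_none_iff.mpr, List.getElem?_eq_none_iff.mpr] <;>
          simp [List.length_take] <;> omega
    rw [heq]
    have : (c m).take a = ((c m).take b).take a := by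
      rw [List.take_take, min_eq_left hab]
    rw [this]
    exact List.take_prefix _ _
  · right
    have heq : (c m).take b = (c n).take b := by
      apply List.ext_getElem?
      intro i
      by_cases hib : i < b
      · rw [List.getElem?_take_of_lt hib, List.getElem?_take_of_lt hib]
        exact (key i (by omega)).symm
      · rw [List.getElem?_eq_none_iff.mpr, List.getElem?_eq_none_iff.mpr] <;>
          simp [List.length_take] <;> omega
    rw [heq]
    have : (c n).take b = ((c n).take a).take b := by
      rw [List.take_take, min_eq_left hab]
    rw [this]
    exact List.take_prefix _ _

theorem unknown_bounded_displacement_eventual_strong_prefix {α : Type*}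
    (c : ℕ → List α) (dis : ℕ)
    (hbd : BoundedDisplacement c dis)
    (hub : ∀ k : ℕ, ∃ n, k < (c n).length) :
    ∃ N, ∀ n m, N ≤ n → N ≤ m →
      ((c n).take ((c n).length / 2)) <+: ((c m).take ((c m).length / 2)) ∨
      ((c m).take ((c m).length / 2)) <+: ((c n).take ((c n).length / 2)) := by
  obtain ⟨N, hN⟩ := hub (3 * dis)
  have hgrow : ∀ m, N ≤ m → 2 * dis ≤ (c m).length := by
    intro m hm
    have hidx : ((c N).length - dis - 1) + dis < (c N).length := by omega
    have := hbd N m hm _ hidx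
    have hne : (c N)[(c N).length - dis - 1]? ≠ none := by
      rw [ne_eq, List.getElem?_eq_none_iff]
      omega
    rw [this, ne_eq, List.getElem?_eq_none_iff] at hne
    omega
  refine ⟨N, fun n m hn hm => ?_⟩
  rcases le_total n m with h | h
  · exact half_lemma c dis hbd n m h (hgrow n hn)
  · exact (half_lemma c dis hbd m n h (hgrow m hm)).symm
end

section
/- Let α be a type and let c : ℕ → List α be a sequence of chains. Suppose there exists N such that (i) for all n, m with N ≤ n ≤ m, (c n) is a prefix of (c m) or (c m) is a prefix of (c n), and (ii) the lengths are nondecreasing from N on, i.e. for all n, m with N ≤ n ≤ m, (c n).length ≤ (c m).length. Then there exists dis : ℕ such that c satisfies the bounded displacement property with bound dis. (This is the converse direction of the paper's Theorem 2: the eventual strong prefix property implies unknown bounded displacement eventual prefix consistency.) -/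
theorem eventual_strong_prefix_implies_bounded_displacement {α : Type*}
    (c : ℕ → List α)
    (h : ∃ N, (∀ n m, N ≤ n → n ≤ m → (c n) <+: (c m) ∨ (c m) <+: (c n)) ∧
      (∀ n m, N ≤ n → n ≤ m → (c n).length ≤ (c m).length)) :
    ∃ dis : ℕ, BoundedDisplacement c dis := by
  obtain ⟨N, hpre, hlen⟩ := h
  refine ⟨(Finset.range N).sup (fun n => (c n).length), fun n m hnm i hi => ?_⟩
  have hN : N ≤ n := by
    by_contra hn
    push_neg at hn
    have : (c n).length ≤ (Finset.range N).sup (fun n => (c n).length) :=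
      Finset.le_sup (f := fun n => (c n).length) (Finset.mem_range.mpr hn)
    omega
  have hpref : (c n) <+: (c m) := by
    rcases hpre n m hN hnm with hp | hp
    · exact hp
    · have h1 : (c m).length ≤ (c n).length := hp.length_le
      have h2 : (c n).length ≤ (c m).length := hlen n m hN hnm
      have heq : c m = c n := hp.eq_of_length_le h2
      exact heq ▸ List.prefix_refl _
  have hi' : i < (c n).length := by omega
  obtain ⟨t, ht⟩ := hpref
  rw [← ht, List.getElem?_append_left hi']
end

section
/- Let C, C' : List ℕ be two notarized chains (lists of epoch numbers indexed by height). Suppose C contains three adjacent blocks with consecutive epochs: h + 2 < C.length with C[h] = e, C[h+1] = e + 1, C[h+2] = e + 2; and suppose C' contains a block of strictly higher epoch: k < C'.length with e + 2 < C'[k]. Then there exist inconsistent positions, i.e. there exist i < C.length and j < C'.length such that C[i] = C'[j], or (C[i] < C'[j] and j < i), or (C'[j] < C[i] and i < j). (This is the combinatorial core of the paper's proof of Theorem 7: in the modified Streamlet protocol, a fork between finalized chains forces the existence of two notarized blocks that are inconsistent with one another.) -/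
theorem fork_inconsistent_blocks_of_higher_epoch (C C' : List ℕ) (h e k : ℕ)
    (hh : h + 2 < C.length)
    (hC0 : C[h] = e) (hC1 : C[h + 1] = e + 1) (hC2 : C[h + 2] = e + 2)
    (hk : k < C'.length) (hk' : e + 2 < C'[k]) :
    ∃ i j, ∃ (hi : i < C.length) (hj : j < C'.length),
      C[i] = C'[j] ∨ (C[i] < C'[j] ∧ j < i) ∨ (C'[j] < C[i] ∧ i < j) := by
  rcases le_or_gt k (h + 1) with hle | hgt
  · exact ⟨h + 2, k, hh, hk, Or.inr (Or.inl ⟨by omega, by omega⟩)⟩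
  · have hj : h + 1 < C'.length := by omega
    rcases lt_trichotomy (C'[h + 1]) (e + 1) with hlt | heq | hgt'
    · rcases eq_or_lt_of_le (Nat.le_of_lt_succ hlt : C'[h+1] ≤ e) with heq2 | hlt2
      · exact ⟨h, h + 1, by omega, hj, Or.inl (by omega)⟩
      · exact ⟨h, h + 1, by omega, hj, Or.inr (Or.inr ⟨by omega, by omega⟩)⟩
    · exact ⟨h + 1, h + 1, by omega, hj, Or.inl (by omega)⟩
    · rcases eq_or_lt_of_le (Nat.succ_le_of_lt hgt' : e + 1 + 1 ≤ C'[h+1]) with heq2 | hlt2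
      · exact ⟨h + 2, h + 1, hh, hj, Or.inl (by omega)⟩
      · exact ⟨h + 2, h + 1, hh, hj, Or.inr (Or.inl ⟨by omega, by omega⟩)⟩
end
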